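/- Suppose φ : Ω → ℝ is continuous and has the extensibility property. Then the family γ^φ = (γ^φ_Λ) defined by γ^φ_Λ(ω_Λ | ω_{Λ^c}) = (Σ_{ξ_Λ ∈ E^Λ} exp ρ^φ(ξ_Λ ω_{ℤ∖Λ}, ω))^{-1} is a translation-invariant Gibbsian specification on Ω: each γ^φ_Λ(·|ω_{Λ^c}) is a probability distribution on E^Λ, the family is consistent, non-null, continuous, and satisfies γ^φ_{Λ+1} = γ^φ_Λ ∘ S. -/

import Mathlib

open Filter Topology MeasureTheory

namespace GP

/-- The configuration space `Ω = E^ℤ`. -/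
abbrev Conf (E : Type*) := ℤ → E

variable {E : Type*}

/-- The shift by `i`: `(shiftZ i ω) k = ω (k + i)`.  The left shift `S` is `shiftZ 1`. -/
def shiftZ (i : ℤ) (ω : Conf E) : Conf E := fun k => ω (k + i)

/-- The cylinder set determined by a word `w ∈ E^n` (placed on coordinates `0,…,n-1`). -/
def cylW {n : ℕ} (w : Fin n → E) : Set (Conf E) := {ω | ∀ j : Fin n, ω ((j : ℕ) : ℤ) = w j}

/-- The cylinder set `[ω_0^{n-1}]`. -/
def cylPt (ω : Conf E) (n : ℕ) : Set (Conf E) :=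
  {ω' | ∀ j : ℕ, j < n → ω' (j : ℤ) = ω (j : ℤ)}

/-- Birkhoff sum `S_n φ = ∑_{k=0}^{n-1} φ ∘ S^k`. -/
def birk (φ : Conf E → ℝ) (n : ℕ) (ω : Conf E) : ℝ :=
  ∑ k ∈ Finset.range n, φ (shiftZ (k : ℤ) ω)

/-- Topological pressure of `φ` on the full shift:
`P(φ) = lim_n (1/n) log ∑_{w ∈ E^n} sup_{ω ∈ [w]} exp (S_n φ (ω))`
(the limit exists; we use `limsup` as the defining expression). -/
noncomputable def press [Fintype E] (φ : Conf E → ℝ) : ℝ :=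
  Filter.limsup (fun n : ℕ =>
    Real.log (∑ w : Fin n → E, sSup ((fun ω => Real.exp (birk φ n ω)) '' cylW w)) / n) atTop

/-- Kolmogorov–Sinai entropy of a shift-invariant measure on the full shift,
computed along the canonical generating partition into cylinders
(the limit exists; we use `limsup` as the defining expression). -/
noncomputable def ent [Fintype E] [MeasurableSpace E] (μ : Measure (Conf E)) : ℝ :=
  Filter.limsup (fun n : ℕ =>
    (- ∑ w : Fin n → E, ((μ (cylW w)).toReal * Real.log (μ (cylW w)).toReal)) / n) atTop

/-- Shift invariance of a measure. -/
def ShiftInv [MeasurableSpace E] (μ : Measure (Conf E)) : Prop :=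
  Measure.map (shiftZ 1) μ = μ

/-- `μ` is an equilibrium state for `φ`: `μ` is a shift-invariant Borel probability
measure with `h(μ) + ∫ φ dμ = P(φ)`. -/
def IsEquilibrium [Fintype E] [MeasurableSpace E] (φ : Conf E → ℝ)
    (μ : Measure (Conf E)) : Prop :=
  IsProbabilityMeasure μ ∧ ShiftInv μ ∧ ent μ + ∫ ω, φ ω ∂μ = press φ

/-- `ω^c`: the configuration equal to `c` at site `0` and to `ω` elsewhere. -/
def upd0 (ω : Conf E) (c : E) : Conf E := Function.update ω 0 c

/-- Partial sums `ρ_n(ξ,η) = ∑_{i=-n}^{n} (φ(S^i ξ) - φ(S^i η))`. -/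
noncomputable def rhoN (φ : Conf E → ℝ) (ξ η : Conf E) (n : ℕ) : ℝ :=
  ∑ i ∈ Finset.Icc (-(n : ℤ)) (n : ℤ), (φ (shiftZ i ξ) - φ (shiftZ i η))

/-- `φ` has the extensibility property: for all `a b ∈ E`, the functions
`ω ↦ ∑_{i=-n}^{n} (φ(S^i(ω^b)) - φ(S^i(ω^a)))` converge uniformly as `n → ∞`. -/
def Extensible (φ : Conf E → ℝ) : Prop :=
  ∀ a b : E, ∃ r : Conf E → ℝ,
    TendstoUniformly (fun n ω => rhoN φ (upd0 ω b) (upd0 ω a) n) r atTop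

/-- The cocycle `ρ^φ(ξ,η) = lim_n ∑_{i=-n}^{n} (φ(S^i ξ) - φ(S^i η))`. -/
noncomputable def rho (φ : Conf E → ℝ) (ξ η : Conf E) : ℝ :=
  limUnder atTop (rhoN φ ξ η)

/-- `ξ` and `η` differ in at most finitely many coordinates. -/
def FinDiff (ξ η : Conf E) : Prop := {k : ℤ | ξ k ≠ η k}.Finite

/-- `ovr Λ ξ ω` is the configuration `ξ_Λ ω_{ℤ∖Λ}`, equal to `ξ` on `Λ` and to `ω` off `Λ`. -/
def ovr (Λ : Finset ℤ) (ξ : {k // k ∈ Λ} → E) (ω : Conf E) : Conf E :=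
  fun k => if h : k ∈ Λ then ξ ⟨k, h⟩ else ω k

/-- `γ` is a specification: each `γ_Λ(·|ω_{Λ^c})` is a probability distribution on `E^Λ`,
and the family is consistent (`γ_Λ = γ_Λ ∘ γ_V` for `V ⊆ Λ`); here `γ Λ ω` denotes
`γ_Λ(ω_Λ | ω_{Λ^c})`. -/
def IsSpecification [Fintype E] (γ : Finset ℤ → Conf E → ℝ) : Prop :=
  (∀ (Λ : Finset ℤ) (ω : Conf E), 0 ≤ γ Λ ω) ∧
  (∀ (Λ : Finset ℤ) (ω : Conf E), ∑ ξ : {k // k ∈ Λ} → E, γ Λ (ovr Λ ξ ω) = 1) ∧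
  (∀ V Λ : Finset ℤ, V ⊆ Λ → ∀ ω : Conf E,
     γ Λ ω = (∑ η : {k // k ∈ V} → E, γ Λ (ovr V η ω)) * γ V ω)

/-- Non-nullness: `inf_ω γ_Λ(ω_Λ|ω_{Λ^c}) > 0` for every finite `Λ`. -/
def NonNull (γ : Finset ℤ → Conf E → ℝ) : Prop :=
  ∀ Λ : Finset ℤ, ∃ c > (0 : ℝ), ∀ ω : Conf E, c ≤ γ Λ ω

/-- Continuity (quasilocality): `ω ↦ γ_Λ(ω_Λ|ω_{Λ^c})` is continuous for every finite `Λ`. -/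
def ContSpec [TopologicalSpace E] (γ : Finset ℤ → Conf E → ℝ) : Prop :=
  ∀ Λ : Finset ℤ, Continuous (γ Λ)

/-- A Gibbsian specification: a non-null continuous specification. -/
def IsGibbsSpec [Fintype E] [TopologicalSpace E] (γ : Finset ℤ → Conf E → ℝ) : Prop :=
  IsSpecification γ ∧ NonNull γ ∧ ContSpec γ

/-- Translation invariance of a specification: `γ_{Λ+1} = γ_Λ ∘ S`. -/
def SpecTI (γ : Finset ℤ → Conf E → ℝ) : Prop :=
  ∀ (Λ : Finset ℤ) (ω : Conf E), γ (Λ.image (· + 1)) ω = γ Λ (shiftZ 1 ω)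

/-- `μ` is a DLR-Gibbs measure for the specification `γ`: `μ` is a Borel probability
measure satisfying the DLR equations `∫ γ_Λ(f|·) dμ = ∫ f dμ` for every finite `Λ`
and every continuous `f` (equivalently, each `γ_Λ` is a version of the conditional
probabilities of `μ`). -/
def IsDLRGibbs [Fintype E] [MeasurableSpace E] [TopologicalSpace E]
    (γ : Finset ℤ → Conf E → ℝ) (μ : Measure (Conf E)) : Prop :=
  IsProbabilityMeasure μ ∧
  ∀ (Λ : Finset ℤ) (f : Conf E → ℝ), Continuous f →
    ∫ ω, (∑ ξ : {k // k ∈ Λ} → E, γ Λ (ovr Λ ξ ω) * f (ovr Λ ξ ω)) ∂μ = ∫ ω, f ω ∂μ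

/-- The specification `γ^φ` associated with an extensible potential `φ`:
`γ^φ_Λ(ω_Λ|ω_{Λ^c}) = (∑_{ξ_Λ ∈ E^Λ} exp ρ^φ(ξ_Λ ω_{ℤ∖Λ}, ω))⁻¹`. -/
noncomputable def specOf [Fintype E] (φ : Conf E → ℝ) : Finset ℤ → Conf E → ℝ :=
  fun Λ ω => (∑ ξ : {k // k ∈ Λ} → E, Real.exp (rho φ (ovr Λ ξ ω) ω))⁻¹

/-- The configuration `𝐚_{-∞}^{-1} b ω_1^{∞}`: equal to `a` at all negative
coordinates, to `b` at coordinate `0`, and to `ω` at positive coordinates. -/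
def bca (a : E) (ω : Conf E) (b : E) : Conf E :=
  fun k => if k < 0 then a else if k = 0 then b else ω k

/-- The potential associated with a specification:
`φ_γ(ω) = log (γ_{{0}}(ω_0 | 𝐚_{-∞}^{-1} ω_1^{∞}) / γ_{{0}}(a | 𝐚_{-∞}^{-1} ω_1^{∞}))`. -/
noncomputable def phiOf (γ : Finset ℤ → Conf E → ℝ) (a : E) (ω : Conf E) : ℝ :=
  Real.log (γ ({0} : Finset ℤ) (bca a ω (ω 0)) / γ ({0} : Finset ℤ) (bca a ω a))

/-- `μ` is weak Bowen-Gibbs for `φ` with constant `P`. -/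
def WeakBowenGibbs [MeasurableSpace E] (μ : Measure (Conf E)) (φ : Conf E → ℝ)
    (P : ℝ) : Prop :=
  ∃ C : ℕ → ℝ, (∀ n, 0 < C n) ∧
    Tendsto (fun n : ℕ => Real.log (C n) / n) atTop (𝓝 0) ∧
    ∀ (n : ℕ) (ω : Conf E),
      (C n)⁻¹ ≤ (μ (cylPt ω n)).toReal / Real.exp (birk φ n ω - n * P) ∧
      (μ (cylPt ω n)).toReal / Real.exp (birk φ n ω - n * P) ≤ C n


-- ## basic shift algebra
lemma shiftZ_shiftZ (i j : ℤ) (ω : Conf E) : shiftZ i (shiftZ j ω) = shiftZ (i + j) ω := by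
  funext k; simp [shiftZ, add_assoc]

lemma shiftZ_update (i j : ℤ) (ω : Conf E) (c : E) :
    shiftZ i (Function.update ω j c) = Function.update (shiftZ i ω) (j - i) c := by
  classical
  funext k
  by_cases h : k = j - i
  · subst h; simp [shiftZ, Function.update_apply]
  · have h' : k + i ≠ j := by omega
    simp [shiftZ, Function.update_apply, h, h']

lemma upd0_eq (ω : Conf E) (c : E) : upd0 ω c = Function.update ω 0 c := rfl

-- ## continuity basics
section Top
variable [TopologicalSpace E]

lemma continuous_shiftZ (i : ℤ) : Continuous (shiftZ i : Conf E → Conf E) :=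
  continuous_pi fun k => continuous_apply (k + i)

lemma continuous_updateFn (j : ℤ) (c : E) :
    Continuous (fun ω : Conf E => Function.update ω j c) := by
  classical
  refine continuous_pi fun k => ?_
  by_cases h : k = j
  · subst h; simpa [Function.update_apply] using continuous_const
  · simpa [Function.update_apply, h] using continuous_apply k

lemma continuous_ovrFn (Λ : Finset ℤ) (ξ : {k // k ∈ Λ} → E) :
    Continuous (fun ω : Conf E => ovr Λ ξ ω) := by
  refine continuous_pi fun k => ?_
  by_cases h : k ∈ Λ
  · simpa [ovr, h] using continuous_const
  · simpa [ovr, h] using continuous_apply k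

lemma continuous_rhoN_comp {φ : Conf E → ℝ} (hφc : Continuous φ)
    {f g : Conf E → Conf E} (hf : Continuous f) (hg : Continuous g) (n : ℕ) :
    Continuous (fun ω => rhoN φ (f ω) (g ω) n) := by
  refine continuous_finset_sum _ fun i _ => Continuous.sub ?_ ?_
  · exact hφc.comp ((continuous_shiftZ i).comp hf)
  · exact hφc.comp ((continuous_shiftZ i).comp hg)

-- ## uniform continuity on cylinders
lemma unifCyl [Fintype E] [DiscreteTopology E] {φ : Conf E → ℝ} (hφc : Continuous φ)
    {ε : ℝ} (hε : 0 < ε) :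
    ∃ N : ℕ, ∀ ξ η : Conf E, (∀ k : ℤ, |k| ≤ (N : ℤ) → ξ k = η k) → |φ ξ - φ η| < ε := by
  by_contra hcon
  push_neg at hcon
  set K : ℕ → Set (Conf E × Conf E) := fun N =>
    {p | (∀ k : ℤ, |k| ≤ (N : ℤ) → p.1 k = p.2 k) ∧ ε ≤ |φ p.1 - φ p.2|} with hK
  have hclosed : ∀ N, IsClosed (K N) := by
    intro N
    have : K N = {p : Conf E × Conf E | ∀ k : ℤ, |k| ≤ (N : ℤ) → p.1 k = p.2 k} ∩
        {p | ε ≤ |φ p.1 - φ p.2|} := rfl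
    rw [this]
    refine IsClosed.inter ?_ ?_
    · have : {p : Conf E × Conf E | ∀ k : ℤ, |k| ≤ (N : ℤ) → p.1 k = p.2 k} =
        ⋂ k : ℤ, {p | |k| ≤ (N : ℤ) → p.1 k = p.2 k} := by
        ext p; simp
      rw [this]
      refine isClosed_iInter fun k => ?_
      by_cases h : |k| ≤ (N : ℤ)
      · have : {p : Conf E × Conf E | |k| ≤ (N : ℤ) → p.1 k = p.2 k} =
          {p | p.1 k = p.2 k} := by ext p; simp [h]
        rw [this]
        exact isClosed_eq ((continuous_apply k).comp continuous_fst)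
          ((continuous_apply k).comp continuous_snd)
      · have : {p : Conf E × Conf E | |k| ≤ (N : ℤ) → p.1 k = p.2 k} = Set.univ := by
          ext p; simp [h]
        rw [this]; exact isClosed_univ
    · exact isClosed_le continuous_const
        (((hφc.comp continuous_fst).sub (hφc.comp continuous_snd)).abs)
  have hmono : ∀ N, K (N + 1) ⊆ K N := by
    intro N p hp
    exact ⟨fun k hk => hp.1 k (by push_cast; omega), hp.2⟩
  have hne : ∀ N, (K N).Nonempty := by
    intro N
    obtain ⟨ξ, η, h1, h2⟩ := hcon N
    exact ⟨(ξ, η), h1, h2⟩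
  have hcompact : IsCompact (K 0) := (hclosed 0).isCompact
  obtain ⟨p, hp⟩ := IsCompact.nonempty_iInter_of_sequence_nonempty_isCompact_isClosed
    K hmono hne hcompact hclosed
  have heq : p.1 = p.2 := by
    funext k
    have := (Set.mem_iInter.1 hp k.natAbs).1 k (le_of_eq (Int.abs_eq_natAbs k))
    exact this
  have := (Set.mem_iInter.1 hp 0).2
  rw [heq] at this
  simp at this
  linarith

end Top

-- ## window shifting for sums over Icc
lemma sum_Icc_shift (a : ℤ → ℝ) (p q : ℤ) (h : p ≤ q) :
    ∑ i ∈ Finset.Icc (p + 1) (q + 1), a i =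
      ∑ i ∈ Finset.Icc p q, a i - a p + a (q + 1) := by
  have h1 : Finset.Icc p (q + 1) = insert (q + 1) (Finset.Icc p q) := by
    ext k; simp only [Finset.mem_Icc, Finset.mem_insert]; omega
  have h2 : Finset.Icc p (q + 1) = insert p (Finset.Icc (p + 1) (q + 1)) := by
    ext k; simp only [Finset.mem_Icc, Finset.mem_insert]; omega
  have e1 : ∑ i ∈ Finset.Icc p (q + 1), a i = a (q + 1) + ∑ i ∈ Finset.Icc p q, a i := by
    rw [h1, Finset.sum_insert (by simp)]
  have e2 : ∑ i ∈ Finset.Icc p (q + 1), a i = a p + ∑ i ∈ Finset.Icc (p + 1) (q + 1), a i := by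
    rw [h2, Finset.sum_insert (by simp)]
  linarith

lemma tendsto_cofinite_int {g : ℕ → ℤ} (hg : Function.Injective g) :
    Tendsto g atTop cofinite := by
  rw [← Nat.cofinite_eq_atTop]
  exact hg.tendsto_cofinite

lemma window (a : ℤ → ℝ) (L : ℝ)
    (h : Tendsto (fun n : ℕ => ∑ i ∈ Finset.Icc (-(n : ℤ)) (n : ℤ), a i) atTop (𝓝 L))
    (h0 : Tendsto a cofinite (𝓝 0)) (j : ℤ) :
    Tendsto (fun n : ℕ => ∑ i ∈ Finset.Icc (-(n : ℤ) + j) ((n : ℤ) + j), a i) atTop (𝓝 L) := by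
  induction j using Int.induction_on with
  | zero => simpa using h
  | succ j ih =>
    have hb : Tendsto (fun n : ℕ => a (-(n : ℤ) + j)) atTop (𝓝 0) :=
      h0.comp (tendsto_cofinite_int (g := fun n : ℕ => -(n : ℤ) + j) (by intro m n hmn; dsimp only at hmn; omega))
    have ht : Tendsto (fun n : ℕ => a ((n : ℤ) + j + 1)) atTop (𝓝 0) :=
      h0.comp (tendsto_cofinite_int (g := fun n : ℕ => (n : ℤ) + j + 1) (by intro m n hmn; dsimp only at hmn; omega))
    have key : ∀ n : ℕ, ∑ i ∈ Finset.Icc (-(n : ℤ) + (j + 1)) ((n : ℤ) + (j + 1)), a i =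
        (∑ i ∈ Finset.Icc (-(n : ℤ) + j) ((n : ℤ) + j), a i) - a (-(n : ℤ) + j)
          + a ((n : ℤ) + j + 1) := by
      intro n
      have := sum_Icc_shift a (-(n : ℤ) + j) ((n : ℤ) + j) (by omega)
      have harr : -(n : ℤ) + (j + 1) = (-(n : ℤ) + j) + 1 := by ring
      have harr2 : (n : ℤ) + (j + 1) = ((n : ℤ) + j) + 1 := by ring
      rw [harr, harr2, this]
    simp only [key]
    have := (ih.sub hb).add ht
    simpa using this
  | pred j ih =>
    have hb : Tendsto (fun n : ℕ => a (-(n : ℤ) + (-(j:ℤ) - 1))) atTop (𝓝 0) :=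
      h0.comp (tendsto_cofinite_int (g := fun n : ℕ => -(n : ℤ) + (-(j:ℤ) - 1))
        (by intro m n hmn; dsimp only at hmn; omega))
    have ht : Tendsto (fun n : ℕ => a ((n : ℤ) + (-(j:ℤ) - 1) + 1)) atTop (𝓝 0) :=
      h0.comp (tendsto_cofinite_int (g := fun n : ℕ => (n : ℤ) + (-(j:ℤ) - 1) + 1)
        (by intro m n hmn; dsimp only at hmn; omega))
    have key : ∀ n : ℕ, ∑ i ∈ Finset.Icc (-(n : ℤ) + (-(j:ℤ) - 1)) ((n : ℤ) + (-(j:ℤ) - 1)), a i =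
        (∑ i ∈ Finset.Icc (-(n : ℤ) + (-(j:ℤ))) ((n : ℤ) + (-(j:ℤ))), a i)
          + a (-(n : ℤ) + (-(j:ℤ) - 1)) - a ((n : ℤ) + (-(j:ℤ) - 1) + 1) := by
      intro n
      have := sum_Icc_shift a (-(n : ℤ) + (-(j:ℤ) - 1)) ((n : ℤ) + (-(j:ℤ) - 1)) (by omega)
      have harr : -(n : ℤ) + (-(j:ℤ)) = (-(n : ℤ) + (-(j:ℤ) - 1)) + 1 := by ring
      have harr2 : (n : ℤ) + (-(j:ℤ)) = ((n : ℤ) + (-(j:ℤ) - 1)) + 1 := by ring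
      rw [harr, harr2, this]; ring
    simp only [key]
    have := (ih.add hb).sub ht
    simpa using this

-- ## nearness
def Near (ξ η : Conf E) : Prop := ∃ F : Finset ℤ, ∀ k ∉ F, ξ k = η k

lemma Near.refl (ξ : Conf E) : Near ξ ξ := ⟨∅, fun _ _ => rfl⟩

lemma Near.symm {ξ η : Conf E} (h : Near ξ η) : Near η ξ := by
  obtain ⟨F, hF⟩ := h; exact ⟨F, fun k hk => (hF k hk).symm⟩

lemma Near.trans {ξ η ζ : Conf E} (h1 : Near ξ η) (h2 : Near η ζ) : Near ξ ζ := by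
  obtain ⟨F1, hF1⟩ := h1; obtain ⟨F2, hF2⟩ := h2
  exact ⟨F1 ∪ F2, fun k hk => by
    rw [Finset.mem_union] at hk; push_neg at hk
    rw [hF1 k hk.1, hF2 k hk.2]⟩

lemma near_ovr (Λ : Finset ℤ) (ξ : {k // k ∈ Λ} → E) (ω : Conf E) : Near (ovr Λ ξ ω) ω :=
  ⟨Λ, fun k hk => by simp [ovr, hk]⟩

lemma near_update (ζ : Conf E) (j : ℤ) (c : E) : Near (Function.update ζ j c) ζ := by
  classical
  exact ⟨{j}, fun k hk => Function.update_of_ne (by simpa using hk) _ _⟩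

lemma Near.shift {ξ η : Conf E} (h : Near ξ η) (i : ℤ) : Near (shiftZ i ξ) (shiftZ i η) := by
  classical
  obtain ⟨F, hF⟩ := h
  refine ⟨F.image (fun x => x - i), fun k hk => ?_⟩
  have : k + i ∉ F := by
    intro hmem
    exact hk (Finset.mem_image.2 ⟨k + i, hmem, by ring⟩)
  simp [shiftZ, hF _ this]

-- ## tails
lemma tail_cofinite [Fintype E] [TopologicalSpace E] [DiscreteTopology E]
    {φ : Conf E → ℝ} (hφc : Continuous φ) {ξ η : Conf E} (h : Near ξ η) :
    Tendsto (fun i : ℤ => φ (shiftZ i ξ) - φ (shiftZ i η)) cofinite (𝓝 0) := by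
  obtain ⟨F, hF⟩ := h
  set M : ℕ := F.sup Int.natAbs with hM
  have hbox : ∀ k : ℤ, (M : ℤ) < |k| → ξ k = η k := by
    intro k hk
    refine hF k fun hmem => ?_
    have : k.natAbs ≤ M := Finset.le_sup hmem
    have : |k| ≤ (M : ℤ) := by rw [Int.abs_eq_natAbs]; exact_mod_cast this
    omega
  rw [Metric.tendsto_nhds]
  intro ε hε
  obtain ⟨N, hN⟩ := unifCyl hφc hε
  rw [Filter.eventually_cofinite]
  have hsub : {i : ℤ | ¬ dist (φ (shiftZ i ξ) - φ (shiftZ i η)) 0 < ε} ⊆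
      Set.Icc (-(N + M + 1 : ℤ)) (N + M + 1 : ℤ) := by
    intro i hi
    rw [Set.mem_Icc]
    by_contra hcon
    apply hi
    rw [Real.dist_eq, sub_zero]
    refine hN (shiftZ i ξ) (shiftZ i η) fun k hk => ?_
    show ξ (k + i) = η (k + i)
    refine hbox _ ?_
    have h1 : |i| ≤ |k + i| + |k| := by
      calc |i| = |(k + i) + (-k)| := by ring_nf
      _ ≤ |k + i| + |(-k)| := abs_add_le _ _
      _ = |k + i| + |k| := by rw [abs_neg]
    have h2 : (N + M + 1 : ℤ) < |i| := by
      rcases abs_cases i with ⟨he, _⟩ | ⟨he, _⟩ <;> omega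
    omega
  exact (Set.finite_Icc _ _).subset hsub

-- ## rhoN algebra
lemma rhoN_add (φ : Conf E → ℝ) (ξ η ζ : Conf E) (n : ℕ) :
    rhoN φ ξ ζ n = rhoN φ ξ η n + rhoN φ η ζ n := by
  rw [rhoN, rhoN, rhoN, ← Finset.sum_add_distrib]
  exact Finset.sum_congr rfl fun i _ => by ring

lemma rhoN_self (φ : Conf E → ℝ) (ξ : Conf E) (n : ℕ) : rhoN φ ξ ξ n = 0 := by
  simp [rhoN]

section Conv
set_option linter.unusedSectionVars false
variable [Fintype E] [Nonempty E] [TopologicalSpace E] [DiscreteTopology E]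
variable {φ : Conf E → ℝ}

lemma tendsto_rhoN_upd0 (hφe : Extensible φ) (a b : E) (ω : Conf E) :
    Tendsto (fun n => rhoN φ (upd0 ω b) (upd0 ω a) n) atTop
      (𝓝 (rho φ (upd0 ω b) (upd0 ω a))) := by
  obtain ⟨r, hr⟩ := hφe a b
  have h := hr.tendsto_at ω
  rwa [rho, h.limUnder_eq]

lemma tendsto_rhoN_update (hφc : Continuous φ) (hφe : Extensible φ)
    (ζ : Conf E) (j : ℤ) (a b : E) :
    Tendsto (rhoN φ (Function.update ζ j b) (Function.update ζ j a)) atTop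
      (𝓝 (rho φ (upd0 (shiftZ j ζ) b) (upd0 (shiftZ j ζ) a))) := by
  set ω := shiftZ j ζ with hω
  set c : ℤ → ℝ := fun i => φ (shiftZ i (upd0 ω b)) - φ (shiftZ i (upd0 ω a)) with hc
  have hsym : Tendsto (fun n : ℕ => ∑ i ∈ Finset.Icc (-(n : ℤ)) (n : ℤ), c i) atTop
      (𝓝 (rho φ (upd0 ω b) (upd0 ω a))) := tendsto_rhoN_upd0 hφe a b ω
  have htail : Tendsto c cofinite (𝓝 0) :=
    tail_cofinite hφc ((near_update ω 0 b).trans (near_update ω 0 a).symm)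
  have hwin := window c _ hsym htail (-j)
  have hkey : ∀ n : ℕ, rhoN φ (Function.update ζ j b) (Function.update ζ j a) n =
      ∑ i ∈ Finset.Icc (-(n : ℤ) + (-j)) ((n : ℤ) + (-j)), c i := by
    intro n
    rw [rhoN, ← Finset.map_add_right_Icc _ _ (-j), Finset.sum_map]
    refine Finset.sum_congr rfl fun i _ => ?_
    have e : ∀ c0 : E, shiftZ (i + -j) (upd0 ω c0) = shiftZ i (Function.update ζ j c0) := by
      intro c0
      rw [upd0_eq, shiftZ_update, shiftZ_update, shiftZ_shiftZ]
      have h1 : i + -j + j = i := by ring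
      have h2 : (0 : ℤ) - (i + -j) = j - i := by ring
      rw [h1, h2]
    have e1 := e b
    have e2 := e a
    simp only [hc, addRightEmbedding_apply, e1, e2]
  exact hwin.congr fun n => (hkey n).symm

lemma rho_update (hφc : Continuous φ) (hφe : Extensible φ) (ζ : Conf E) (j : ℤ) (a b : E) :
    rho φ (Function.update ζ j b) (Function.update ζ j a) =
      rho φ (upd0 (shiftZ j ζ) b) (upd0 (shiftZ j ζ) a) :=
  (tendsto_rhoN_update hφc hφe ζ j a b).limUnder_eq

lemma exists_tendsto_rhoN (hφc : Continuous φ) (hφe : Extensible φ) :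
    ∀ (F : Finset ℤ) (ξ η : Conf E), (∀ k ∉ F, ξ k = η k) →
      ∃ L, Tendsto (rhoN φ ξ η) atTop (𝓝 L) := by
  classical
  intro F
  induction F using Finset.induction_on with
  | empty =>
    intro ξ η h
    have : ξ = η := funext fun k => h k (by simp)
    subst this
    exact ⟨0, tendsto_const_nhds.congr fun n => (rhoN_self φ _ n).symm⟩
  | insert j F' hj ih =>
    intro ξ η h
    set η' := Function.update η j (ξ j) with hη'
    have h1 : ∀ k ∉ F', ξ k = η' k := by
      intro k hk
      by_cases hkj : k = j
      · subst hkj; simp [hη']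
      · rw [hη', Function.update_of_ne hkj]
        exact h k (by simp [hkj, hk])
    obtain ⟨L1, hL1⟩ := ih ξ η' h1
    have hL2 : Tendsto (rhoN φ η' η) atTop
        (𝓝 (rho φ (upd0 (shiftZ j η) (ξ j)) (upd0 (shiftZ j η) (η j)))) := by
      have := tendsto_rhoN_update hφc hφe η j (η j) (ξ j)
      rwa [Function.update_eq_self] at this
    refine ⟨L1 + rho φ (upd0 (shiftZ j η) (ξ j)) (upd0 (shiftZ j η) (η j)), ?_⟩
    exact (hL1.add hL2).congr fun n => (rhoN_add φ ξ η' η n).symm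

lemma tendsto_rhoN (hφc : Continuous φ) (hφe : Extensible φ) {ξ η : Conf E} (h : Near ξ η) :
    Tendsto (rhoN φ ξ η) atTop (𝓝 (rho φ ξ η)) := by
  obtain ⟨F, hF⟩ := h
  obtain ⟨L, hL⟩ := exists_tendsto_rhoN hφc hφe F ξ η hF
  rwa [rho, hL.limUnder_eq]

lemma rho_self (φ : Conf E → ℝ) (ξ : Conf E) : rho φ ξ ξ = 0 := by
  have : Tendsto (rhoN φ ξ ξ) atTop (𝓝 0) :=
    tendsto_const_nhds.congr fun n => (rhoN_self φ ξ n).symm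
  exact this.limUnder_eq

lemma rho_cocycle (hφc : Continuous φ) (hφe : Extensible φ) {ξ η ζ : Conf E}
    (h1 : Near ξ η) (h2 : Near η ζ) : rho φ ξ ζ = rho φ ξ η + rho φ η ζ := by
  have := ((tendsto_rhoN hφc hφe h1).add (tendsto_rhoN hφc hφe h2)).congr
    fun n => (rhoN_add φ ξ η ζ n).symm
  exact this.limUnder_eq

lemma rho_symm (hφc : Continuous φ) (hφe : Extensible φ) {ξ η : Conf E} (h : Near ξ η) :
    rho φ η ξ = -rho φ ξ η := by
  have := rho_cocycle hφc hφe h h.symm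
  rw [rho_self] at this
  linarith

lemma rho_sub_base (hφc : Continuous φ) (hφe : Extensible φ) {A B ω : Conf E}
    (hA : Near A ω) (hB : Near B ω) : rho φ A B = rho φ A ω - rho φ B ω := by
  rw [rho_cocycle hφc hφe hA hB.symm, rho_symm hφc hφe hB]
  ring

lemma rho_shift (hφc : Continuous φ) (hφe : Extensible φ) {ξ η : Conf E} (h : Near ξ η) :
    rho φ (shiftZ 1 ξ) (shiftZ 1 η) = rho φ ξ η := by
  set a : ℤ → ℝ := fun i => φ (shiftZ i ξ) - φ (shiftZ i η) with ha
  have hsym : Tendsto (fun n : ℕ => ∑ i ∈ Finset.Icc (-(n : ℤ)) (n : ℤ), a i) atTop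
      (𝓝 (rho φ ξ η)) := tendsto_rhoN hφc hφe h
  have htail : Tendsto a cofinite (𝓝 0) := tail_cofinite hφc h
  have hwin := window a _ hsym htail 1
  have hkey : ∀ n : ℕ, rhoN φ (shiftZ 1 ξ) (shiftZ 1 η) n =
      ∑ i ∈ Finset.Icc (-(n : ℤ) + 1) ((n : ℤ) + 1), a i := by
    intro n
    rw [rhoN, ← Finset.map_add_right_Icc _ _ (1 : ℤ), Finset.sum_map]
    refine Finset.sum_congr rfl fun i _ => ?_
    simp only [ha, addRightEmbedding_apply, shiftZ_shiftZ]
  exact (hwin.congr fun n => (hkey n).symm).limUnder_eq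

end Conv


-- ## the partition function
noncomputable def Zf [Fintype E] (φ : Conf E → ℝ) (Λ : Finset ℤ) (ω : Conf E) : ℝ :=
  ∑ ξ : {k // k ∈ Λ} → E, Real.exp (rho φ (ovr Λ ξ ω) ω)

lemma specOf_eq [Fintype E] (φ : Conf E → ℝ) (Λ : Finset ℤ) (ω : Conf E) :
    specOf φ Λ ω = (Zf φ Λ ω)⁻¹ := rfl

lemma ovr_ovr {V Λ : Finset ℤ} (hVΛ : V ⊆ Λ) (ξ : {k // k ∈ Λ} → E)
    (η : {k // k ∈ V} → E) (ω : Conf E) : ovr Λ ξ (ovr V η ω) = ovr Λ ξ ω := by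
  funext k
  by_cases h : k ∈ Λ
  · simp [ovr, h]
  · have hv : k ∉ V := fun hk => h (hVΛ hk)
    simp [ovr, h, hv]

section Spec
set_option linter.unusedSectionVars false
variable [Fintype E] [Nonempty E] [TopologicalSpace E] [DiscreteTopology E]
variable {φ : Conf E → ℝ}

lemma Zf_pos (Λ : Finset ℤ) (ω : Conf E) : 0 < Zf φ Λ ω :=
  Finset.sum_pos (fun _ _ => Real.exp_pos _) Finset.univ_nonempty

lemma Zf_ovr (hφc : Continuous φ) (hφe : Extensible φ) {V Λ : Finset ℤ} (hVΛ : V ⊆ Λ)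
    (η : {k // k ∈ V} → E) (ω : Conf E) :
    Zf φ Λ (ovr V η ω) = Real.exp (-(rho φ (ovr V η ω) ω)) * Zf φ Λ ω := by
  rw [Zf, Zf, Finset.mul_sum]
  refine Finset.sum_congr rfl fun ξ _ => ?_
  rw [ovr_ovr hVΛ, rho_sub_base hφc hφe (near_ovr Λ ξ ω) (near_ovr V η ω), ← Real.exp_add]
  congr 1; ring

lemma sum_specOf (hφc : Continuous φ) (hφe : Extensible φ) {V Λ : Finset ℤ} (hVΛ : V ⊆ Λ)
    (ω : Conf E) :
    ∑ η : {k // k ∈ V} → E, specOf φ Λ (ovr V η ω) = Zf φ V ω / Zf φ Λ ω := by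
  have h : ∀ η : {k // k ∈ V} → E,
      specOf φ Λ (ovr V η ω) = Real.exp (rho φ (ovr V η ω) ω) * (Zf φ Λ ω)⁻¹ := by
    intro η
    rw [specOf_eq, Zf_ovr hφc hφe hVΛ, mul_inv, Real.exp_neg, inv_inv]
  rw [Finset.sum_congr rfl (fun η _ => h η), ← Finset.sum_mul, ← Zf, div_eq_mul_inv]

-- ## continuity
lemma continuous_rho_upd0 (hφc : Continuous φ) (hφe : Extensible φ) (a b : E) :
    Continuous (fun ω : Conf E => rho φ (upd0 ω b) (upd0 ω a)) := by
  obtain ⟨r, hr⟩ := hφe a b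
  have hre : (fun ω : Conf E => rho φ (upd0 ω b) (upd0 ω a)) = r :=
    funext fun ω => (hr.tendsto_at ω).limUnder_eq
  rw [hre]
  refine hr.continuous (Filter.Frequently.of_forall fun n => ?_)
  exact continuous_rhoN_comp hφc (continuous_updateFn 0 b) (continuous_updateFn 0 a) n

lemma continuous_rho_update_comp (hφc : Continuous φ) (hφe : Extensible φ) (j : ℤ) (b : E)
    {g : Conf E → Conf E} (hg : Continuous g) :
    Continuous (fun ω => rho φ (Function.update (g ω) j b) (g ω)) := by
  classical
  have hrw : ∀ ω, rho φ (Function.update (g ω) j b) (g ω) =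
      ∑ a : E, if g ω j = a then
        rho φ (upd0 (shiftZ j (g ω)) b) (upd0 (shiftZ j (g ω)) a) else 0 := by
    intro ω
    rw [Finset.sum_ite_eq Finset.univ (g ω j), if_pos (Finset.mem_univ _)]
    have h := rho_update hφc hφe (g ω) j (g ω j) b
    rwa [Function.update_eq_self] at h
  have heq : (fun ω => rho φ (Function.update (g ω) j b) (g ω)) =
      fun ω => ∑ a : E, if g ω j = a then
        rho φ (upd0 (shiftZ j (g ω)) b) (upd0 (shiftZ j (g ω)) a) else 0 := funext hrw
  rw [heq]
  refine continuous_finset_sum _ fun a _ => ?_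
  have hclop : IsClopen {ω : Conf E | g ω j = a} :=
    (isClopen_discrete {a}).preimage ((continuous_apply j).comp hg)
  refine Continuous.if ?_ ?_ continuous_const
  · rw [isClopen_iff_frontier_eq_empty.1 hclop]
    intro x hx
    exact absurd hx (Set.notMem_empty x)
  · exact (continuous_rho_upd0 hφc hφe a b).comp ((continuous_shiftZ j).comp hg)

lemma continuous_rho_ovr (hφc : Continuous φ) (hφe : Extensible φ) (Λ : Finset ℤ) :
    ∀ ξ : {k // k ∈ Λ} → E, Continuous fun ω => rho φ (ovr Λ ξ ω) ω := by
  classical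
  induction Λ using Finset.induction_on with
  | empty =>
    intro ξ
    have h0 : ∀ ω : Conf E, ovr ∅ ξ ω = ω := fun ω => funext fun k => by simp [ovr]
    have h2 : (fun ω => rho φ (ovr ∅ ξ ω) ω) = fun _ => (0 : ℝ) :=
      funext fun ω => by rw [h0, rho_self]
    rw [h2]; exact continuous_const
  | insert j Λ' hj ih =>
    intro ξ
    have hjmem : j ∈ insert j Λ' := Finset.mem_insert_self j Λ'
    set b := ξ ⟨j, hjmem⟩ with hb
    set ξ' : {k // k ∈ Λ'} → E := fun k => ξ ⟨k.1, Finset.mem_insert_of_mem k.2⟩ with hξ'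
    have hovr : ∀ ω, ovr (insert j Λ') ξ ω = Function.update (ovr Λ' ξ' ω) j b := by
      intro ω; funext k
      by_cases hk : k = j
      · subst hk; simp [ovr, hjmem, hb]
      · rw [Function.update_of_ne hk]
        by_cases hk' : k ∈ Λ'
        · simp [ovr, hk', Finset.mem_insert_of_mem hk', hξ']
        · have hni : k ∉ insert j Λ' := by simp [hk, hk']
          simp [ovr, hni, hk']
    have hdec : ∀ ω, rho φ (ovr (insert j Λ') ξ ω) ω =
        rho φ (Function.update (ovr Λ' ξ' ω) j b) (ovr Λ' ξ' ω) + rho φ (ovr Λ' ξ' ω) ω := by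
      intro ω
      rw [hovr ω]
      exact rho_cocycle hφc hφe (near_update _ j b) (near_ovr Λ' ξ' ω)
    have heq : (fun ω => rho φ (ovr (insert j Λ') ξ ω) ω) = fun ω =>
        rho φ (Function.update (ovr Λ' ξ' ω) j b) (ovr Λ' ξ' ω)
          + rho φ (ovr Λ' ξ' ω) ω := funext hdec
    rw [heq]
    exact (continuous_rho_update_comp hφc hφe j b (continuous_ovrFn Λ' ξ')).add (ih ξ')

lemma continuous_Zf (hφc : Continuous φ) (hφe : Extensible φ) (Λ : Finset ℤ) :
    Continuous (Zf φ Λ) := by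
  unfold Zf
  exact continuous_finset_sum _ fun ξ _ =>
    Real.continuous_exp.comp (continuous_rho_ovr hφc hφe Λ ξ)

lemma continuous_specOf (hφc : Continuous φ) (hφe : Extensible φ) (Λ : Finset ℤ) :
    Continuous (specOf φ Λ) :=
  (continuous_Zf hφc hφe Λ).inv₀ fun ω => (Zf_pos Λ ω).ne'

-- ## translation invariance
def shiftEquiv (Λ : Finset ℤ) : {k // k ∈ Λ} ≃ {k // k ∈ Λ.image (· + 1)} where
  toFun k := ⟨k.1 + 1, Finset.mem_image.2 ⟨k.1, k.2, rfl⟩⟩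
  invFun k := ⟨k.1 - 1, by
    obtain ⟨x, hx, hxe⟩ := Finset.mem_image.1 k.2
    have hxk : k.1 - 1 = x := by omega
    rw [hxk]; exact hx⟩
  left_inv k := Subtype.ext (by simp)
  right_inv k := Subtype.ext (by simp)

@[simp] lemma shiftEquiv_symm_coe (Λ : Finset ℤ) (k : {k // k ∈ Λ.image (· + 1)}) :
    ((shiftEquiv Λ).symm k : ℤ) = (k : ℤ) - 1 := rfl

lemma Zf_shift (hφc : Continuous φ) (hφe : Extensible φ) (Λ : Finset ℤ) (ω : Conf E) :
    Zf φ (Λ.image (· + 1)) ω = Zf φ Λ (shiftZ 1 ω) := by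
  classical
  set Λ' := Λ.image (· + 1) with hΛ'
  rw [Zf, Zf]
  refine (Fintype.sum_equiv (Equiv.arrowCongr (shiftEquiv Λ) (Equiv.refl E)) _ _
    fun ξ => ?_).symm
  set ξ'' : {k // k ∈ Λ'} → E := Equiv.arrowCongr (shiftEquiv Λ) (Equiv.refl E) ξ with hξ''
  have hA : shiftZ 1 (ovr Λ' ξ'' ω) = ovr Λ ξ (shiftZ 1 ω) := by
    funext k
    show ovr Λ' ξ'' ω (k + 1) = ovr Λ ξ (shiftZ 1 ω) k
    by_cases hk : k ∈ Λ
    · have hk' : k + 1 ∈ Λ' := Finset.mem_image.2 ⟨k, hk, rfl⟩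
      rw [ovr, ovr]
      rw [dif_pos hk', dif_pos hk]
      show ξ ((shiftEquiv Λ).symm ⟨k + 1, hk'⟩) = ξ ⟨k, hk⟩
      congr 1
      refine Subtype.ext ?_
      rw [shiftEquiv_symm_coe]
      show k + 1 - 1 = k
      omega
    · have hk' : k + 1 ∉ Λ' := by
        intro hmem
        obtain ⟨x, hx, hxe⟩ := Finset.mem_image.1 hmem
        have : x = k := by omega
        exact hk (this ▸ hx)
      rw [ovr, ovr, dif_neg hk', dif_neg hk]
      rfl
  have := rho_shift hφc hφe (near_ovr Λ' ξ'' ω)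
  rw [hA] at this
  rw [← this]

end Spec


/-- For `φ` continuous with the extensibility property, the family
`γ^φ_Λ(ω_Λ|ω_{Λ^c}) = (∑_{ξ_Λ} exp ρ^φ(ξ_Λ ω_{ℤ∖Λ}, ω))⁻¹` is a translation-invariant
Gibbsian specification (a consistent family of probability kernels, non-null and
continuous, with `γ^φ_{Λ+1} = γ^φ_Λ ∘ S`). -/
theorem specOf_isGibbsSpec [Fintype E] [Nonempty E] [TopologicalSpace E] [DiscreteTopology E]
    [MeasurableSpace E] [MeasurableSingletonClass E]
    (φ : Conf E → ℝ) (hφc : Continuous φ) (hφe : Extensible φ) :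
    IsGibbsSpec (specOf φ) ∧ SpecTI (specOf φ) := by
  refine ⟨⟨⟨?_, ?_, ?_⟩, ?_, ?_⟩, ?_⟩
  · intro Λ ω
    rw [specOf_eq]
    exact inv_nonneg.2 (Zf_pos Λ ω).le
  · intro Λ ω
    rw [sum_specOf hφc hφe (subset_refl Λ) ω]
    exact div_self (Zf_pos Λ ω).ne'
  · intro V Λ hVΛ ω
    rw [sum_specOf hφc hφe hVΛ ω, specOf_eq, specOf_eq]
    have h1 := (Zf_pos (φ := φ) Λ ω).ne'
    have h2 := (Zf_pos (φ := φ) V ω).ne'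
    field_simp
  · intro Λ
    have hc := continuous_specOf hφc hφe Λ
    obtain ⟨ω₀, -, hmin⟩ := isCompact_univ.exists_isMinOn Set.univ_nonempty hc.continuousOn
    refine ⟨specOf φ Λ ω₀, ?_, fun ω => isMinOn_iff.1 hmin ω (Set.mem_univ ω)⟩
    rw [specOf_eq]
    exact inv_pos.2 (Zf_pos Λ ω₀)
  · exact continuous_specOf hφc hφe
  · intro Λ ω
    rw [specOf_eq, specOf_eq, Zf_shift hφc hφe Λ ω]

end GP
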